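/- Let X be a bounded metric space and λΔ a simplex (a metric space all of whose non-zero distances equal λ > 0) with #X < #(λΔ). Then 2 d_GH(λΔ, X) = max{λ, diam X − λ}. -/

import Mathlib

open Set Metric
open scoped ENNReal

universe u

/-- The distortion of a relation between two metric spaces, valued in `[0,∞]`. -/
noncomputable def relDis {X Y : Type u} [MetricSpace X] [MetricSpace Y]
    (σ : Set (X × Y)) : ℝ≥0∞ :=
  ⨆ p ∈ σ, ⨆ q ∈ σ, ENNReal.ofReal |dist p.1 q.1 - dist p.2 q.2|

/-- A correspondence between `X` and `Y`: a relation whose projections are surjective. -/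
def IsCorrespondence {X Y : Type u} (R : Set (X × Y)) : Prop :=
  (∀ x : X, ∃ y : Y, (x, y) ∈ R) ∧ (∀ y : Y, ∃ x : X, (x, y) ∈ R)

/-- A realization of the pair `(X, Y)`: isometric embeddings into a common space. -/
structure GHEmbed (X Y : Type u) [MetricSpace X] [MetricSpace Y] where
  Z : Type u
  [instZ : MetricSpace Z]
  f : X → Z
  g : Y → Z
  hf : Isometry f
  hg : Isometry g

noncomputable def GHEmbed.hd {X Y : Type u} [MetricSpace X] [MetricSpace Y]
    (e : GHEmbed X Y) : ℝ≥0∞ := by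
  letI := e.instZ
  exact EMetric.hausdorffEdist (Set.range e.f) (Set.range e.g)

/-- The Gromov–Hausdorff distance, valued in `[0,∞]`. -/
noncomputable def ghDist (X Y : Type u) [MetricSpace X] [MetricSpace Y] : ℝ≥0∞ :=
  ⨅ e : GHEmbed X Y, e.hd

/-- A partition of `X` into non-empty pairwise disjoint parts covering `X`. -/
def IsPartition {X : Type u} (D : Set (Set X)) : Prop :=
  (∀ A ∈ D, A.Nonempty) ∧ D.PairwiseDisjoint id ∧ ⋃₀ D = Set.univ

/-- `diam D`: the supremum of the diameters of the parts of `D`. -/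
noncomputable def diamP {X : Type u} [MetricSpace X] (D : Set (Set X)) : ℝ :=
  sSup (Metric.diam '' D)

/-- `α(D)`: the infimum of distances between points of distinct parts. -/
noncomputable def alphaP {X : Type u} [MetricSpace X] (D : Set (Set X)) : ℝ :=
  sInf {d | ∃ A ∈ D, ∃ B ∈ D, A ≠ B ∧ ∃ a ∈ A, ∃ b ∈ B, d = dist a b}

/-- `β(D)`: the supremum of distances between points of distinct parts. -/
noncomputable def betaP {X : Type u} [MetricSpace X] (D : Set (Set X)) : ℝ :=
  sSup {d | ∃ A ∈ D, ∃ B ∈ D, A ≠ B ∧ ∃ a ∈ A, ∃ b ∈ B, d = dist a b}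

/-- Distance from a bounded space `X` to a simplex of strictly larger cardinality. -/
theorem stmt_12 {Δ X : Type u} [MetricSpace Δ] [MetricSpace X] [Nonempty X]
    {lam : ℝ} (hlam : 0 < lam)
    (hΔ : ∀ x y : Δ, x ≠ y → dist x y = lam)
    (hX : Bornology.IsBounded (Set.univ : Set X))
    (hcard : Cardinal.mk X < Cardinal.mk Δ) :
    2 * ghDist Δ X
      = ENNReal.ofReal (max lam (Metric.diam (Set.univ : Set X) - lam)) := by
  have hΔne : Nonempty Δ := Cardinal.mk_ne_zero_iff.mp (lt_of_le_of_lt zero_le hcard).ne'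
  set dX := Metric.diam (Set.univ : Set X) with hdXdef
  have hdX0 : (0:ℝ) ≤ dX := Metric.diam_nonneg
  set m := max lam (dX - lam) with hmdef
  have hm0 : (0:ℝ) < m := lt_max_iff.mpr (Or.inl hlam)
  have hlamm : lam ≤ m := le_max_left _ _
  have hdm : dX - lam ≤ m := le_max_right _ _
  have hdistle : ∀ x y : X, dist x y ≤ dX := fun x y =>
    Metric.dist_le_diam_of_mem hX (Set.mem_univ x) (Set.mem_univ y)
  -- the surjection from Δ onto X
  obtain ⟨i⟩ := (Cardinal.le_def X Δ).mp hcard.le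
  set f : Δ → X := Function.invFun i with hfdef
  have hfsurj : Function.Surjective f := Function.invFun_surjective i.injective
  -- the glued metric space
  have Hcond : ∀ p q : Δ, |dist (id p) (id q) - dist (f p) (f q)| ≤ 2 * (m / 2) := by
    intro p q
    rcases eq_or_ne p q with rfl | hpq
    · simp; linarith
    · rw [id, id, hΔ p q hpq, abs_le]
      have h1 := hdistle (f p) (f q)
      have h2 := dist_nonneg (x := f p) (y := f q)
      constructor <;> [linarith; linarith]
  letI Zm : MetricSpace (Δ ⊕ X) := Metric.glueMetricApprox id f (m / 2) (by linarith) Hcond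
  have hinl : Isometry (Sum.inl : Δ → Δ ⊕ X) :=
    Isometry.of_dist_eq fun a b => rfl
  have hinr : Isometry (Sum.inr : X → Δ ⊕ X) :=
    Isometry.of_dist_eq fun a b => rfl
  let e₀ : GHEmbed Δ X := ⟨Δ ⊕ X, Sum.inl, Sum.inr, hinl, hinr⟩
  have he₀ : e₀.hd ≤ ENNReal.ofReal (m / 2) := by
    have hd0 : e₀.hd = EMetric.hausdorffEdist (Set.range (Sum.inl : Δ → Δ ⊕ X))
        (Set.range (Sum.inr : X → Δ ⊕ X)) := rfl
    rw [hd0]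
    apply EMetric.hausdorffEdist_le_of_mem_edist
    · rintro _ ⟨p, rfl⟩
      refine ⟨Sum.inr (f p), Set.mem_range_self _, ?_⟩
      rw [edist_dist]
      exact ENNReal.ofReal_le_ofReal
        (le_of_eq (Metric.glueDist_glued_points id f (m / 2) p))
    · rintro _ ⟨x, rfl⟩
      obtain ⟨p, rfl⟩ := hfsurj x
      refine ⟨Sum.inl p, Set.mem_range_self _, ?_⟩
      rw [edist_comm, edist_dist]
      exact ENNReal.ofReal_le_ofReal
        (le_of_eq (Metric.glueDist_glued_points id f (m / 2) p))
  have hofm : ENNReal.ofReal m = 2 * ENNReal.ofReal (m / 2) := by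
    rw [← ENNReal.ofReal_ofNat, ← ENNReal.ofReal_mul (by norm_num)]
    congr 1; ring
  -- lower bound for any embedding
  have hlb : ∀ e : GHEmbed Δ X, ENNReal.ofReal m ≤ 2 * e.hd := by
    intro e
    letI := e.instZ
    have hd0 : e.hd = EMetric.hausdorffEdist (Set.range e.f) (Set.range e.g) := rfl
    -- claim 1 : lam ≤ 2 hd
    have claim1 : ENNReal.ofReal lam ≤ 2 * e.hd := by
      by_contra h1
      have hlt : e.hd < ENNReal.ofReal (lam / 2) := by
        by_contra h2
        push_neg at h2
        refine h1 ?_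
        have : ENNReal.ofReal lam = 2 * ENNReal.ofReal (lam / 2) := by
          rw [← ENNReal.ofReal_ofNat, ← ENNReal.ofReal_mul (by norm_num)]
          congr 1; ring
        rw [this]
        exact mul_le_mul_right h2 2
      have hexists : ∀ p : Δ, ∃ x : X, edist (e.f p) (e.g x) < ENNReal.ofReal (lam / 2) := by
        intro p
        rw [hd0] at hlt
        obtain ⟨y, hyB, hy⟩ :=
          EMetric.exists_edist_lt_of_hausdorffEdist_lt (Set.mem_range_self p) hlt
        obtain ⟨x, rfl⟩ := hyB
        exact ⟨x, hy⟩
      choose φ hφ using hexists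
      have hninj : ¬Function.Injective φ := fun hinj =>
        absurd (Cardinal.mk_le_of_injective hinj) (not_le.mpr hcard)
      obtain ⟨p, q, heq, hne⟩ := Function.not_injective_iff.mp hninj
      have : ENNReal.ofReal lam < ENNReal.ofReal lam := by
        calc ENNReal.ofReal lam = edist p q := by rw [edist_dist, hΔ p q hne]
          _ = edist (e.f p) (e.f q) := (e.hf p q).symm
          _ ≤ edist (e.f p) (e.g (φ p)) + edist (e.g (φ p)) (e.f q) := edist_triangle _ _ _
          _ < ENNReal.ofReal (lam / 2) + ENNReal.ofReal (lam / 2) := by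
              refine ENNReal.add_lt_add (hφ p) ?_
              rw [edist_comm, heq]
              exact hφ q
          _ = ENNReal.ofReal lam := by
              rw [← ENNReal.ofReal_add (by linarith) (by linarith)]
              congr 1; ring
      exact absurd this (lt_irrefl _)
    -- claim 2 : dX - lam ≤ 2 hd
    have claim2 : ENNReal.ofReal (dX - lam) ≤ 2 * e.hd := by
      by_contra h2'
      push_neg at h2'
      have hpos : (0:ℝ≥0∞) < ENNReal.ofReal (dX - lam) :=
        lt_of_le_of_lt zero_le h2'
      have hdlpos : 0 < dX - lam := ENNReal.ofReal_pos.mp hpos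
      have hfin : e.hd ≠ ⊤ := by
        intro ht
        rw [ht] at h2'
        simp [ENNReal.mul_top] at h2'
      set s := e.hd.toReal with hsdef
      have hs0 : 0 ≤ s := ENNReal.toReal_nonneg
      have hs : e.hd = ENNReal.ofReal s := (ENNReal.ofReal_toReal hfin).symm
      have h2s : 2 * s < dX - lam := by
        have : (2 : ℝ≥0∞) * e.hd = ENNReal.ofReal (2 * s) := by
          rw [hs, ← ENNReal.ofReal_ofNat, ← ENNReal.ofReal_mul (by norm_num)]
        rw [this] at h2'
        exact (ENNReal.ofReal_lt_ofReal_iff hdlpos).mp h2'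
      set t := s + (dX - lam - 2 * s) / 4 with htdef
      have hst : s < t := by rw [htdef]; linarith
      have ht0 : 0 < t := lt_of_le_of_lt hs0 hst
      have hht : e.hd < ENNReal.ofReal t := by
        rw [hs]
        exact (ENNReal.ofReal_lt_ofReal_iff ht0).mpr hst
      have h2t : 2 * t + lam < dX := by rw [htdef]; linarith
      clear hs hsdef htdef hst h2s
      clear_value s t
      have key : ∀ x y : X, dist x y ≤ t + lam + t := by
        intro x y
        have hltBA : EMetric.hausdorffEdist (Set.range e.g) (Set.range e.f)
            < ENNReal.ofReal t := by
          show Metric.hausdorffEDist _ _ < _; rw [Metric.hausdorffEDist_comm]; rw [hd0] at hht; exact hht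
        obtain ⟨a, haA, ha⟩ :=
          EMetric.exists_edist_lt_of_hausdorffEdist_lt (Set.mem_range_self x) hltBA
        obtain ⟨p, rfl⟩ := haA
        obtain ⟨b, hbA, hb⟩ :=
          EMetric.exists_edist_lt_of_hausdorffEdist_lt (Set.mem_range_self y) hltBA
        obtain ⟨q, rfl⟩ := hbA
        have hmid : edist (e.f p) (e.f q) ≤ ENNReal.ofReal lam := by
          rw [e.hf p q, edist_dist]
          rcases eq_or_ne p q with rfl | hpq
          · simp
          · exact ENNReal.ofReal_le_ofReal (le_of_eq (hΔ p q hpq))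
        have : edist x y ≤ ENNReal.ofReal (t + lam + t) := by
          calc edist x y = edist (e.g x) (e.g y) := (e.hg x y).symm
            _ ≤ edist (e.g x) (e.f p) + edist (e.f p) (e.f q) + edist (e.f q) (e.g y) :=
                edist_triangle4 _ _ _ _
            _ ≤ ENNReal.ofReal t + ENNReal.ofReal lam + ENNReal.ofReal t := by
                gcongr
                rw [edist_comm]; exact hb.le
            _ = ENNReal.ofReal (t + lam + t) := by
                rw [ENNReal.ofReal_add (add_nonneg ht0.le hlam.le) ht0.le,
                  ENNReal.ofReal_add ht0.le hlam.le]
        exact (edist_le_ofReal (by linarith)).mp this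
      have : dX ≤ t + lam + t :=
        Metric.diam_le_of_forall_dist_le (by linarith) fun x _ y _ => key x y
      linarith
    rcases max_cases lam (dX - lam) with ⟨hmax, _⟩ | ⟨hmax, _⟩
    · rw [hmdef, hmax]; exact claim1
    · rw [hmdef, hmax]; exact claim2
  apply le_antisymm
  · calc 2 * ghDist Δ X ≤ 2 * e₀.hd := mul_le_mul_right (iInf_le _ e₀) 2
      _ ≤ 2 * ENNReal.ofReal (m / 2) := mul_le_mul_right he₀ 2
      _ = ENNReal.ofReal m := hofm.symm
  · calc ENNReal.ofReal m ≤ ⨅ e : GHEmbed Δ X, 2 * e.hd := le_iInf hlb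
      _ = 2 * ghDist Δ X := (ENNReal.mul_iInf_of_ne (by norm_num) (by norm_num)).symm
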